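/- Define G ⊆ ℚ² as the subgroup generated by g₁ = (1,0), g₂ = (0,1), (g₁+g₂)/2, g₁/p for all odd-indexed primes p (p₁ = 3, p₃ = 7, ...), and g₂/p for all even-indexed primes p ≥ 5 (p₂ = 5, p₄ = 11, ...). Then G is indecomposable. -/

import Mathlib

/-- `nthPrime i` is the `i`-th prime: `nthPrime 0 = 2`, `nthPrime 1 = 3`, ... -/
noncomputable def nthPrime (i : ℕ) : ℕ := Nat.nth Nat.Prime i

/-- The base group of Theorem 5.2. -/
noncomputable def baseGroup : AddSubgroup (ℚ × ℚ) :=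
  AddSubgroup.closure
    ({((1 : ℚ), (0 : ℚ)), ((0 : ℚ), (1 : ℚ)), ((1/2 : ℚ), (1/2 : ℚ))} ∪
      {x | ∃ k : ℕ, x = ((1 / (nthPrime (2 * k + 1)) : ℚ), (0 : ℚ))} ∪
      {x | ∃ k : ℕ, x = ((0 : ℚ), (1 / (nthPrime (2 * k + 2)) : ℚ))})

/-! ### Auxiliary facts about `nthPrime` -/

lemma nthPrime_prime (i : ℕ) : (nthPrime i).Prime := Nat.prime_nth_prime i

lemma nthPrime_ge (i : ℕ) : i + 2 ≤ nthPrime i := Nat.add_two_le_nth_prime i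

lemma nthPrime_injective : Function.Injective nthPrime :=
  Nat.nth_injective Nat.infinite_setOf_prime

/-! ### The subgroup of rationals whose denominator is not divisible by `p` -/

/-- For a prime `p`, the rationals with denominator not divisible by `p` form a subgroup. -/
def noDvdDen (p : ℕ) (hp : p.Prime) : AddSubgroup ℚ where
  carrier := {x : ℚ | ¬ (p ∣ x.den)}
  zero_mem' := by
    show ¬ (p ∣ (0 : ℚ).den)
    rw [Rat.den_zero]
    simpa using hp.ne_one
  add_mem' := by
    intro x y hx hy h
    rcases hp.dvd_mul.mp (h.trans (Rat.add_den_dvd x y)) with h' | h'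
    · exact hx h'
    · exact hy h'
  neg_mem' := by
    intro x hx
    simpa only [Set.mem_setOf_eq, Rat.den_neg_eq_den] using hx

lemma mem_noDvdDen {p : ℕ} (hp : p.Prime) {x : ℚ} : x ∈ noDvdDen p hp ↔ ¬ (p ∣ x.den) :=
  Iff.rfl

lemma den_one_div_prime {q : ℕ} (hq : q.Prime) : ((1 : ℚ) / (q : ℚ)).den = q := by
  rw [one_div]
  exact Rat.inv_natCast_den_of_pos hq.pos

lemma not_dvd_one_den {p : ℕ} (hp : p.Prime) : ¬ (p ∣ ((1 : ℚ)).den) := by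
  rw [Rat.den_one]
  simpa using hp.ne_one

lemma not_dvd_zero_den {p : ℕ} (hp : p.Prime) : ¬ (p ∣ ((0 : ℚ)).den) := by
  rw [Rat.den_zero]
  simpa using hp.ne_one

lemma half_den : ((1/2 : ℚ)).den = 2 := by norm_num

/-! ### Membership constraints on coordinates of elements of `baseGroup` -/

/-- Denominators of second coordinates are not divisible by odd-indexed primes. -/
lemma snd_den_not_dvd (k : ℕ) {x : ℚ × ℚ} (hx : x ∈ baseGroup) :
    ¬ (nthPrime (2 * k + 1) ∣ x.2.den) := by
  set p := nthPrime (2 * k + 1) with hpdef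
  have hp : p.Prime := nthPrime_prime _
  have hle : baseGroup ≤ AddSubgroup.comap (AddMonoidHom.snd ℚ ℚ) (noDvdDen p hp) := by
    rw [baseGroup]
    refine (AddSubgroup.closure_le _).2 ?_
    intro y hy
    simp only [Set.mem_union, Set.mem_insert_iff, Set.mem_singleton_iff, Set.mem_setOf_eq] at hy
    rw [SetLike.mem_coe, AddSubgroup.mem_comap]
    obtain ((rfl | rfl | rfl) | ⟨j, rfl⟩) | ⟨j, rfl⟩ := hy
    · exact not_dvd_zero_den hp
    · exact not_dvd_one_den hp
    · show ¬ (p ∣ ((1/2 : ℚ)).den)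
      rw [half_den]
      intro hd
      have : p = 2 := (Nat.prime_dvd_prime_iff_eq hp Nat.prime_two).mp hd
      have := nthPrime_ge (2 * k + 1)
      omega
    · exact not_dvd_zero_den hp
    · show ¬ (p ∣ ((1 : ℚ) / (nthPrime (2 * j + 2) : ℚ)).den)
      rw [den_one_div_prime (nthPrime_prime _)]
      intro hd
      have : p = nthPrime (2 * j + 2) :=
        (Nat.prime_dvd_prime_iff_eq hp (nthPrime_prime _)).mp hd
      have := nthPrime_injective this
      omega
  exact hle hx

/-- Denominators of first coordinates are not divisible by even-indexed primes `≥ 5`. -/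
lemma fst_den_not_dvd (k : ℕ) {x : ℚ × ℚ} (hx : x ∈ baseGroup) :
    ¬ (nthPrime (2 * k + 2) ∣ x.1.den) := by
  set p := nthPrime (2 * k + 2) with hpdef
  have hp : p.Prime := nthPrime_prime _
  have hle : baseGroup ≤ AddSubgroup.comap (AddMonoidHom.fst ℚ ℚ) (noDvdDen p hp) := by
    rw [baseGroup]
    refine (AddSubgroup.closure_le _).2 ?_
    intro y hy
    simp only [Set.mem_union, Set.mem_insert_iff, Set.mem_singleton_iff, Set.mem_setOf_eq] at hy
    rw [SetLike.mem_coe, AddSubgroup.mem_comap]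
    obtain ((rfl | rfl | rfl) | ⟨j, rfl⟩) | ⟨j, rfl⟩ := hy
    · exact not_dvd_one_den hp
    · exact not_dvd_zero_den hp
    · show ¬ (p ∣ ((1/2 : ℚ)).den)
      rw [half_den]
      intro hd
      have : p = 2 := (Nat.prime_dvd_prime_iff_eq hp Nat.prime_two).mp hd
      have := nthPrime_ge (2 * k + 2)
      omega
    · show ¬ (p ∣ ((1 : ℚ) / (nthPrime (2 * j + 1) : ℚ)).den)
      rw [den_one_div_prime (nthPrime_prime _)]
      intro hd
      have : p = nthPrime (2 * j + 1) :=
        (Nat.prime_dvd_prime_iff_eq hp (nthPrime_prime _)).mp hd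
      have := nthPrime_injective this
      omega
    · exact not_dvd_zero_den hp
  exact hle hx

/-- The difference of the two coordinates of an element of `baseGroup` has odd denominator. -/
lemma sub_den_not_dvd {x : ℚ × ℚ} (hx : x ∈ baseGroup) : ¬ (2 ∣ (x.1 - x.2).den) := by
  have hle : baseGroup ≤
      AddSubgroup.comap (AddMonoidHom.fst ℚ ℚ - AddMonoidHom.snd ℚ ℚ) (noDvdDen 2 Nat.prime_two) := by
    rw [baseGroup]
    refine (AddSubgroup.closure_le _).2 ?_
    intro y hy
    simp only [Set.mem_union, Set.mem_insert_iff, Set.mem_singleton_iff, Set.mem_setOf_eq] at hy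
    rw [SetLike.mem_coe, AddSubgroup.mem_comap]
    obtain ((rfl | rfl | rfl) | ⟨j, rfl⟩) | ⟨j, rfl⟩ := hy
    · show ¬ (2 ∣ ((1 : ℚ) - 0).den); norm_num
    · show ¬ (2 ∣ ((0 : ℚ) - 1).den); norm_num
    · show ¬ (2 ∣ ((1/2 : ℚ) - 1/2).den); norm_num
    · show ¬ (2 ∣ ((1 : ℚ) / (nthPrime (2 * j + 1) : ℚ) - 0).den)
      rw [sub_zero, den_one_div_prime (nthPrime_prime _)]
      intro hd
      have : 2 = nthPrime (2 * j + 1) :=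
        (Nat.prime_dvd_prime_iff_eq Nat.prime_two (nthPrime_prime _)).mp hd
      have := nthPrime_ge (2 * j + 1)
      omega
    · show ¬ (2 ∣ ((0 : ℚ) - (1 : ℚ) / (nthPrime (2 * j + 2) : ℚ)).den)
      rw [zero_sub, Rat.den_neg_eq_den, den_one_div_prime (nthPrime_prime _)]
      intro hd
      have : 2 = nthPrime (2 * j + 2) :=
        (Nat.prime_dvd_prime_iff_eq Nat.prime_two (nthPrime_prime _)).mp hd
      have := nthPrime_ge (2 * j + 2)
      omega
  exact hle hx

/-! ### Arithmetic lemma -/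

/-- If `x = z * p` with `p` prime not dividing the denominator of `z`, then `p ∣ x.num`. -/
lemma prime_dvd_num {p : ℕ} (hp : p.Prime) {x z : ℚ} (hxz : x = z * (p : ℚ))
    (hz : ¬ (p ∣ z.den)) : (p : ℤ) ∣ x.num := by
  have hxd : ((x.den : ℚ)) ≠ 0 := by exact_mod_cast x.den_nz
  have hzd : ((z.den : ℚ)) ≠ 0 := by exact_mod_cast z.den_nz
  have hx' : (x.num : ℚ) = x * x.den := by
    exact (Rat.mul_den_eq_num x).symm
  have hz' : (z.num : ℚ) = z * z.den := by
    exact (Rat.mul_den_eq_num z).symm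
  have key : (x.num : ℚ) * z.den = z.num * p * x.den := by
    rw [hx', hz', hxz]; ring
  have keyZ : x.num * (z.den : ℤ) = z.num * (p : ℤ) * x.den := by exact_mod_cast key
  have hdvd : (p : ℤ) ∣ x.num * (z.den : ℤ) := ⟨z.num * x.den, by rw [keyZ]; ring⟩
  rcases (Nat.prime_iff_prime_int.mp hp).dvd_mul.mp hdvd with h | h
  · exact h
  · exact absurd (Int.ofNat_dvd.mp (by exact_mod_cast h)) hz

/-! ### Generators of `baseGroup` as elements -/

lemma mem_g1 : ((1 : ℚ), (0 : ℚ)) ∈ baseGroup :=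
  AddSubgroup.subset_closure (Or.inl (Or.inl (Or.inl rfl)))

lemma mem_g2 : ((0 : ℚ), (1 : ℚ)) ∈ baseGroup :=
  AddSubgroup.subset_closure (Or.inl (Or.inl (Or.inr (Or.inl rfl))))

lemma mem_gh : ((1/2 : ℚ), (1/2 : ℚ)) ∈ baseGroup :=
  AddSubgroup.subset_closure (Or.inl (Or.inl (Or.inr (Or.inr rfl))))

lemma mem_podd (k : ℕ) : ((1 / (nthPrime (2 * k + 1)) : ℚ), (0 : ℚ)) ∈ baseGroup :=
  AddSubgroup.subset_closure (Or.inl (Or.inr ⟨k, rfl⟩))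

lemma mem_peven (k : ℕ) : ((0 : ℚ), (1 / (nthPrime (2 * k + 2)) : ℚ)) ∈ baseGroup :=
  AddSubgroup.subset_closure (Or.inr ⟨k, rfl⟩)

noncomputable def G1 : baseGroup := ⟨((1 : ℚ), (0 : ℚ)), mem_g1⟩
noncomputable def G2 : baseGroup := ⟨((0 : ℚ), (1 : ℚ)), mem_g2⟩
noncomputable def GH : baseGroup := ⟨((1/2 : ℚ), (1/2 : ℚ)), mem_gh⟩

/-! ### Uniqueness of decomposition -/

lemma uniq_decomp {M : Type*} [AddCommGroup M] {A B : AddSubgroup M} (hinf : A ⊓ B = ⊥)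
    {a a' b b' : M} (ha : a ∈ A) (ha' : a' ∈ A) (hb : b ∈ B) (hb' : b' ∈ B)
    (h : a + b = a' + b') : a = a' := by
  have hmem : a - a' ∈ A ⊓ B := by
    rw [AddSubgroup.mem_inf]
    constructor
    · exact sub_mem ha ha'
    · have hbb : a - a' = b' - b := by
        rw [sub_eq_sub_iff_add_eq_add, h, add_comm]
      rw [hbb]
      exact sub_mem hb' hb
  rw [hinf, AddSubgroup.mem_bot] at hmem
  exact sub_eq_zero.mp hmem

/-! ### Helper contradictions -/

/-- If both basis vectors lie in `A` and `B` is nontrivial, contradiction. -/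
lemma same_side (A B : AddSubgroup baseGroup) (hB : B ≠ ⊥) (hinf : A ⊓ B = ⊥)
    (h1 : G1 ∈ A) (h2 : G2 ∈ A) : False := by
  rw [ne_eq, AddSubgroup.eq_bot_iff_forall] at hB
  push_neg at hB
  obtain ⟨b, hbB, hbne⟩ := hB
  obtain ⟨x, hx⟩ : ∃ t, (b : ℚ × ℚ).1 = t := ⟨_, rfl⟩
  obtain ⟨y, hy⟩ : ∃ t, (b : ℚ × ℚ).2 = t := ⟨_, rfl⟩
  have hxden : ((x.den : ℚ)) ≠ 0 := by exact_mod_cast x.den_nz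
  have hyden : ((y.den : ℚ)) ≠ 0 := by exact_mod_cast y.den_nz
  have hxe : (x.den : ℚ) * x = x.num := by
    exact Rat.den_mul_eq_num x
  have hye : (y.den : ℚ) * y = y.num := by
    exact Rat.den_mul_eq_num y
  have key : ((x.den * y.den : ℤ)) • b = (x.num * y.den) • G1 + (y.num * x.den) • G2 := by
    apply Subtype.ext
    show ((x.den * y.den : ℤ)) • (b : ℚ × ℚ) =
      (x.num * (y.den : ℤ)) • ((1 : ℚ), (0 : ℚ)) + (y.num * (x.den : ℤ)) • ((0 : ℚ), (1 : ℚ))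
    apply Prod.ext <;>
      simp only [Prod.fst_add, Prod.snd_add, Prod.smul_fst, Prod.smul_snd, Prod.smul_mk] <;>
      simp only [zsmul_eq_mul] <;>
      push_cast
    · rw [hx]
      linear_combination (y.den : ℚ) * hxe
    · rw [hy]
      linear_combination (x.den : ℚ) * hye
  have hmem : ((x.den * y.den : ℤ)) • b ∈ A ⊓ B := by
    refine ⟨?_, AddSubgroup.zsmul_mem B hbB _⟩
    rw [key]
    exact add_mem (AddSubgroup.zsmul_mem A h1 _) (AddSubgroup.zsmul_mem A h2 _)
  rw [hinf, AddSubgroup.mem_bot] at hmem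
  have hN : ((x.den * y.den : ℤ)) ≠ 0 := by
    simp [x.den_nz, y.den_nz]
  have : ((x.den * y.den : ℤ)) • (b : ℚ × ℚ) = 0 := by
    have := congrArg (fun z : baseGroup => (z : ℚ × ℚ)) hmem
    simpa using this
  rcases smul_eq_zero.mp this with h | h
  · exact hN h
  · exact hbne (Subtype.ext h)

/-- If `G1 ∈ A` and `G2 ∈ B` with `A ⊕ B = G`, contradiction via `(1/2, 1/2)`. -/
lemma cross_side (A B : AddSubgroup baseGroup) (hsup : A ⊔ B = ⊤) (hinf : A ⊓ B = ⊥)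
    (h1 : G1 ∈ A) (h2 : G2 ∈ B) : False := by
  have hmem : GH ∈ A ⊔ B := by rw [hsup]; exact AddSubgroup.mem_top _
  obtain ⟨a, haA, c, hcB, hac⟩ := AddSubgroup.mem_sup.mp hmem
  have h2a : (2 : ℤ) • a + (2 : ℤ) • c = G1 + G2 := by
    have : (2 : ℤ) • (a + c) = G1 + G2 := by
      rw [hac]
      apply Subtype.ext
      push_cast
      show (2 : ℤ) • ((1/2 : ℚ), (1/2 : ℚ)) = ((1 : ℚ), (0 : ℚ)) + ((0 : ℚ), (1 : ℚ))
      rw [Prod.mk_add_mk]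
      rw [Prod.smul_mk]
      norm_num
    rw [← this, smul_add]
  have heq : (2 : ℤ) • a = G1 :=
    uniq_decomp hinf (AddSubgroup.zsmul_mem A haA _) h1 (AddSubgroup.zsmul_mem B hcB _) h2 h2a
  have hcoe : (2 : ℤ) • (a : ℚ × ℚ) = ((1 : ℚ), (0 : ℚ)) := by
    have := congrArg (fun z : baseGroup => (z : ℚ × ℚ)) heq
    simpa [G1] using this
  have ha1 : (a : ℚ × ℚ).1 = 1/2 := by
    have : (2 : ℤ) • (a : ℚ × ℚ).1 = 1 := congrArg Prod.fst hcoe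
    have h' : (2 : ℚ) * (a : ℚ × ℚ).1 = 1 := by
      rw [← this]; push_cast [zsmul_eq_mul]; ring
    linarith
  have ha2 : (a : ℚ × ℚ).2 = 0 := by
    have : (2 : ℤ) • (a : ℚ × ℚ).2 = 0 := congrArg Prod.snd hcoe
    have h' : (2 : ℚ) * (a : ℚ × ℚ).2 = 0 := by
      rw [← this]; push_cast [zsmul_eq_mul]; ring
    linarith
  have := sub_den_not_dvd a.property
  rw [ha1, ha2, sub_zero, half_den] at this
  exact this dvd_rfl

/-! ### Main theorem -/

theorem baseGroup_indecomposable :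
    ¬ ∃ A B : AddSubgroup baseGroup,
      A ≠ ⊥ ∧ B ≠ ⊥ ∧ A ⊔ B = ⊤ ∧ A ⊓ B = ⊥ := by
  rintro ⟨A, B, hA, hB, hsup, hinf⟩
  have decomp : ∀ g : baseGroup, ∃ a ∈ A, ∃ b ∈ B, a + b = g := by
    intro g
    have : g ∈ A ⊔ B := by rw [hsup]; exact AddSubgroup.mem_top _
    exact AddSubgroup.mem_sup.mp this
  -- The component in A of a p-divisible element is p-divisible
  have divis : ∀ (g gp : baseGroup) (a b : baseGroup) (p : ℕ),
      a ∈ A → b ∈ B → a + b = g → (p : ℤ) • gp = g →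
      ∃ u : baseGroup, (p : ℤ) • u = a := by
    intro g gp a b p haA hbB hab hpg
    obtain ⟨u, huA, v, hvB, huv⟩ := decomp gp
    refine ⟨u, ?_⟩
    have : (p : ℤ) • u + (p : ℤ) • v = a + b := by
      rw [← smul_add, huv, hpg, hab]
    exact uniq_decomp hinf (AddSubgroup.zsmul_mem A huA _) haA
      (AddSubgroup.zsmul_mem B hvB _) hbB this
  -- decompose G1
  obtain ⟨a1, ha1A, b1, hb1B, hab1⟩ := decomp G1
  -- decompose G2
  obtain ⟨a2, ha2A, b2, hb2B, hab2⟩ := decomp G2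
  -- second coordinate of a1 vanishes
  have ha1snd : ((a1 : ℚ × ℚ)).2 = 0 := by
    by_contra hne
    set x : ℚ := ((a1 : ℚ × ℚ)).2 with hxdef
    have hxnum : x.num ≠ 0 := Rat.num_ne_zero.mpr hne
    set k : ℕ := x.num.natAbs with hkdef
    set p : ℕ := nthPrime (2 * k + 1) with hpdef
    have hp : p.Prime := nthPrime_prime _
    have hpg : (p : ℤ) • (⟨_, mem_podd k⟩ : baseGroup) = G1 := by
      apply Subtype.ext
      show (p : ℤ) • ((1 / (p : ℚ)), (0 : ℚ)) = ((1 : ℚ), (0 : ℚ))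
      rw [Prod.smul_mk]
      have hpne : (p : ℚ) ≠ 0 := by
        exact_mod_cast hp.pos.ne'
      rw [zsmul_eq_mul, zsmul_eq_mul]
      push_cast
      rw [mul_one_div, div_self hpne, mul_zero]
    obtain ⟨u, hu⟩ := divis G1 _ a1 b1 p ha1A hb1B hab1 hpg
    have hcoe : (p : ℤ) • ((u : ℚ × ℚ)).2 = x := by
      have := congrArg (fun z : baseGroup => ((z : ℚ × ℚ)).2) hu
      simpa using this
    have hxz : x = ((u : ℚ × ℚ)).2 * (p : ℚ) := by
      rw [← hcoe, zsmul_eq_mul]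
      push_cast
      ring
    have hzden : ¬ (p ∣ ((u : ℚ × ℚ)).2.den) := snd_den_not_dvd k u.property
    have hdvd : (p : ℤ) ∣ x.num := prime_dvd_num hp hxz hzden
    have hple : (p : ℤ) ≤ |x.num| := Int.le_of_dvd (abs_pos.mpr hxnum) ((dvd_abs _ _).mpr hdvd)
    have habs : |x.num| = (k : ℤ) := by
      rw [Int.abs_eq_natAbs, hkdef]
    rw [habs] at hple
    have hpk : p ≤ k := by exact_mod_cast hple
    have := nthPrime_ge (2 * k + 1)
    omega
  -- first coordinate of a2 vanishes
  have ha2fst : ((a2 : ℚ × ℚ)).1 = 0 := by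
    by_contra hne
    set x : ℚ := ((a2 : ℚ × ℚ)).1 with hxdef
    have hxnum : x.num ≠ 0 := Rat.num_ne_zero.mpr hne
    set k : ℕ := x.num.natAbs with hkdef
    set p : ℕ := nthPrime (2 * k + 2) with hpdef
    have hp : p.Prime := nthPrime_prime _
    have hpg : (p : ℤ) • (⟨_, mem_peven k⟩ : baseGroup) = G2 := by
      apply Subtype.ext
      show (p : ℤ) • ((0 : ℚ), (1 / (p : ℚ))) = ((0 : ℚ), (1 : ℚ))
      rw [Prod.smul_mk]
      have hpne : (p : ℚ) ≠ 0 := by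
        exact_mod_cast hp.pos.ne'
      rw [zsmul_eq_mul, zsmul_eq_mul]
      push_cast
      rw [mul_one_div, div_self hpne, mul_zero]
    obtain ⟨u, hu⟩ := divis G2 _ a2 b2 p ha2A hb2B hab2 hpg
    have hcoe : (p : ℤ) • ((u : ℚ × ℚ)).1 = x := by
      have := congrArg (fun z : baseGroup => ((z : ℚ × ℚ)).1) hu
      simpa using this
    have hxz : x = ((u : ℚ × ℚ)).1 * (p : ℚ) := by
      rw [← hcoe, zsmul_eq_mul]
      push_cast
      ring
    have hzden : ¬ (p ∣ ((u : ℚ × ℚ)).1.den) := fst_den_not_dvd k u.property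
    have hdvd : (p : ℤ) ∣ x.num := prime_dvd_num hp hxz hzden
    have hple : (p : ℤ) ≤ |x.num| := Int.le_of_dvd (abs_pos.mpr hxnum) ((dvd_abs _ _).mpr hdvd)
    have habs : |x.num| = (k : ℤ) := by
      rw [Int.abs_eq_natAbs, hkdef]
    rw [habs] at hple
    have hpk : p ≤ k := by exact_mod_cast hple
    have := nthPrime_ge (2 * k + 2)
    omega
  -- complementary components
  have hb1snd : ((b1 : ℚ × ℚ)).2 = 0 := by
    have := congrArg (fun z : baseGroup => ((z : ℚ × ℚ)).2) hab1
    simp only [AddSubgroup.coe_add, Prod.snd_add] at this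
    have h0 : ((a1 : ℚ × ℚ)).2 + ((b1 : ℚ × ℚ)).2 = 0 := by
      simpa [G1] using this
    rw [ha1snd] at h0
    linarith
  have hb2fst : ((b2 : ℚ × ℚ)).1 = 0 := by
    have := congrArg (fun z : baseGroup => ((z : ℚ × ℚ)).1) hab2
    simp only [AddSubgroup.coe_add, Prod.fst_add] at this
    have h0 : ((a2 : ℚ × ℚ)).1 + ((b2 : ℚ × ℚ)).1 = 0 := by
      simpa [G2] using this
    rw [ha2fst] at h0
    linarith
  -- a generic lemma: two nonzero elements on the same axis in A and B contradict A ⊓ B = ⊥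
  have axis1 : ∀ a b : baseGroup, a ∈ A → b ∈ B → ((a : ℚ × ℚ)).2 = 0 → ((b : ℚ × ℚ)).2 = 0 →
      a ≠ 0 → b ≠ 0 → False := by
    intro a b haA hbB ha2 hb2 hane hbne
    obtain ⟨x, hxd⟩ : ∃ t, ((a : ℚ × ℚ)).1 = t := ⟨_, rfl⟩
    obtain ⟨x', hx'd⟩ : ∃ t, ((b : ℚ × ℚ)).1 = t := ⟨_, rfl⟩
    have hxne : x ≠ 0 := by
      intro h
      apply hane
      apply Subtype.ext
      show (a : ℚ × ℚ) = 0
      have hsplit : (a : ℚ × ℚ) = (((a : ℚ × ℚ)).1, ((a : ℚ × ℚ)).2) := rfl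
      rw [hsplit, hxd, h, ha2]
      rfl
    have hx'ne : x' ≠ 0 := by
      intro h
      apply hbne
      apply Subtype.ext
      show (b : ℚ × ℚ) = 0
      have hsplit : (b : ℚ × ℚ) = (((b : ℚ × ℚ)).1, ((b : ℚ × ℚ)).2) := rfl
      rw [hsplit, hx'd, h, hb2]
      rfl
    have hxe : (x.den : ℚ) * x = x.num := by
      have : ((x.den : ℚ)) ≠ 0 := by exact_mod_cast x.den_nz
      exact Rat.den_mul_eq_num x
    have hx'e : (x'.den : ℚ) * x' = x'.num := by
      have : ((x'.den : ℚ)) ≠ 0 := by exact_mod_cast x'.den_nz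
      exact Rat.den_mul_eq_num x'
    have key : (x'.num * x.den) • a = (x.num * x'.den) • b := by
      apply Subtype.ext
      show (x'.num * (x.den : ℤ)) • (a : ℚ × ℚ) = (x.num * (x'.den : ℤ)) • (b : ℚ × ℚ)
      apply Prod.ext <;>
        simp only [Prod.smul_fst, Prod.smul_snd] <;>
        simp only [zsmul_eq_mul]
      · rw [hxd, hx'd]
        push_cast
        linear_combination (x'.num : ℚ) * hxe - (x.num : ℚ) * hx'e
      · rw [ha2, hb2, mul_zero, mul_zero]
    have hmem : (x'.num * x.den) • a ∈ A ⊓ B := by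
      rw [AddSubgroup.mem_inf]
      refine ⟨AddSubgroup.zsmul_mem A haA _, ?_⟩
      rw [key]
      exact AddSubgroup.zsmul_mem B hbB _
    rw [hinf, AddSubgroup.mem_bot] at hmem
    have hN : (x'.num * (x.den : ℤ)) ≠ 0 := by
      apply mul_ne_zero
      · exact Rat.num_ne_zero.mpr hx'ne
      · exact_mod_cast x.den_nz
    have hz : (x'.num * (x.den : ℤ)) • (a : ℚ × ℚ) = 0 := by
      have := congrArg (fun z : baseGroup => (z : ℚ × ℚ)) hmem
      simpa using this
    rcases smul_eq_zero.mp hz with h | h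
    · exact hN h
    · exact hane (Subtype.ext h)
  have axis2 : ∀ a b : baseGroup, a ∈ A → b ∈ B → ((a : ℚ × ℚ)).1 = 0 → ((b : ℚ × ℚ)).1 = 0 →
      a ≠ 0 → b ≠ 0 → False := by
    intro a b haA hbB ha1 hb1 hane hbne
    obtain ⟨y, hyd⟩ : ∃ t, ((a : ℚ × ℚ)).2 = t := ⟨_, rfl⟩
    obtain ⟨y', hy'd⟩ : ∃ t, ((b : ℚ × ℚ)).2 = t := ⟨_, rfl⟩
    have hyne : y ≠ 0 := by
      intro h
      apply hane
      apply Subtype.ext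
      show (a : ℚ × ℚ) = 0
      have hsplit : (a : ℚ × ℚ) = (((a : ℚ × ℚ)).1, ((a : ℚ × ℚ)).2) := rfl
      rw [hsplit, hyd, h, ha1]
      rfl
    have hy'ne : y' ≠ 0 := by
      intro h
      apply hbne
      apply Subtype.ext
      show (b : ℚ × ℚ) = 0
      have hsplit : (b : ℚ × ℚ) = (((b : ℚ × ℚ)).1, ((b : ℚ × ℚ)).2) := rfl
      rw [hsplit, hy'd, h, hb1]
      rfl
    have hye : (y.den : ℚ) * y = y.num := by
      have : ((y.den : ℚ)) ≠ 0 := by exact_mod_cast y.den_nz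
      exact Rat.den_mul_eq_num y
    have hy'e : (y'.den : ℚ) * y' = y'.num := by
      have : ((y'.den : ℚ)) ≠ 0 := by exact_mod_cast y'.den_nz
      exact Rat.den_mul_eq_num y'
    have key : (y'.num * y.den) • a = (y.num * y'.den) • b := by
      apply Subtype.ext
      show (y'.num * (y.den : ℤ)) • (a : ℚ × ℚ) = (y.num * (y'.den : ℤ)) • (b : ℚ × ℚ)
      apply Prod.ext <;>
        simp only [Prod.smul_fst, Prod.smul_snd] <;>
        simp only [zsmul_eq_mul]
      · rw [ha1, hb1, mul_zero, mul_zero]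
      · rw [hyd, hy'd]
        push_cast
        linear_combination (y'.num : ℚ) * hye - (y.num : ℚ) * hy'e
    have hmem : (y'.num * y.den) • a ∈ A ⊓ B := by
      rw [AddSubgroup.mem_inf]
      refine ⟨AddSubgroup.zsmul_mem A haA _, ?_⟩
      rw [key]
      exact AddSubgroup.zsmul_mem B hbB _
    rw [hinf, AddSubgroup.mem_bot] at hmem
    have hN : (y'.num * (y.den : ℤ)) ≠ 0 := by
      apply mul_ne_zero
      · exact Rat.num_ne_zero.mpr hy'ne
      · exact_mod_cast y.den_nz
    have hz : (y'.num * (y.den : ℤ)) • (a : ℚ × ℚ) = 0 := by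
      have := congrArg (fun z : baseGroup => (z : ℚ × ℚ)) hmem
      simpa using this
    rcases smul_eq_zero.mp hz with h | h
    · exact hN h
    · exact hane (Subtype.ext h)
  -- G1 lies in A or B
  have hg1 : G1 ∈ A ∨ G1 ∈ B := by
    rcases eq_or_ne a1 0 with h | h
    · right
      rw [← hab1, h, zero_add]
      exact hb1B
    rcases eq_or_ne b1 0 with h' | h'
    · left
      rw [← hab1, h', add_zero]
      exact ha1A
    exact absurd (axis1 a1 b1 ha1A hb1B ha1snd hb1snd h h') (fun f => f)
  have hg2 : G2 ∈ A ∨ G2 ∈ B := by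
    rcases eq_or_ne a2 0 with h | h
    · right
      rw [← hab2, h, zero_add]
      exact hb2B
    rcases eq_or_ne b2 0 with h' | h'
    · left
      rw [← hab2, h', add_zero]
      exact ha2A
    exact absurd (axis2 a2 b2 ha2A hb2B ha2fst hb2fst h h') (fun f => f)
  have hinf' : B ⊓ A = ⊥ := by rw [inf_comm]; exact hinf
  have hsup' : B ⊔ A = ⊤ := by rw [sup_comm]; exact hsup
  rcases hg1 with h1 | h1 <;> rcases hg2 with h2 | h2
  · exact same_side A B hB hinf h1 h2
  · exact cross_side A B hsup hinf h1 h2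
  · exact cross_side B A hsup' hinf' h1 h2
  · exact same_side B A hA hinf' h1 h2
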